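/- Let x : ℕ → ℝ be a real sequence (indexed from 1). The series Σ_{i=1}^∞ x_i converges to a finite limit if and only if there exists a nonnegative sequence (c_j)_{j≥1} with c_j → 0 such that for every sequence of block sizes n : ℕ → ℕ with n_j ≥ 1 for all j, there exists J such that |S_j| ≤ c_j for all j ≥ J, where S_j is the j-th block sum determined by the block sizes n. -/

import Mathlib

open Filter Finset

/-- Cumulative block endpoints: `N n j = n 1 + ⋯ + n j`, with `N n 0 = 0`. -/
noncomputable def blockEnd (n : ℕ → ℕ) (j : ℕ) : ℕ := ∑ k ∈ Finset.Icc 1 j, n k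

/-- The `j`-th block sum `S j = ∑_{i = N_{j-1}+1}^{N_j} x i`. -/
noncomputable def blockSum (x : ℕ → ℝ) (n : ℕ → ℕ) (j : ℕ) : ℝ :=
  ∑ i ∈ Finset.Ioc (blockEnd n (j - 1)) (blockEnd n j), x i

lemma blockEnd_mono (n : ℕ → ℕ) : Monotone (blockEnd n) := by
  intro a b hab
  exact Finset.sum_le_sum_of_subset (Finset.Icc_subset_Icc le_rfl hab)

lemma le_blockEnd (n : ℕ → ℕ) (hn : ∀ j, 1 ≤ n j) (j : ℕ) : j ≤ blockEnd n j := by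
  have : ∑ k ∈ Finset.Icc 1 j, 1 ≤ ∑ k ∈ Finset.Icc 1 j, n k :=
    Finset.sum_le_sum fun k _ => hn k
  simpa [blockEnd, Finset.sum_const] using this

lemma partial_eq_Ioc (x : ℕ → ℝ) (m : ℕ) :
    ∑ i ∈ Finset.Icc 1 m, x i = ∑ i ∈ Finset.Ioc 0 m, x i := by
  rw [← Finset.Icc_add_one_left_eq_Ioc]; rfl

lemma blockSum_eq (x : ℕ → ℝ) (n : ℕ → ℕ) (j : ℕ) :
    blockSum x n j =
      (∑ i ∈ Finset.Icc 1 (blockEnd n j), x i)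
        - ∑ i ∈ Finset.Icc 1 (blockEnd n (j - 1)), x i := by
  rw [partial_eq_Ioc, partial_eq_Ioc]
  have h := Finset.sum_Ioc_consecutive x (Nat.zero_le (blockEnd n (j - 1)))
    (blockEnd_mono n (Nat.sub_le j 1))
  rw [blockSum, ← h]
  ring

/-- Deterministic backbone of the Bayesian characterization (Theorems 1 and 2,
with the relaxation of Remark 1): the series `∑_{i=1}^∞ x i` converges to a
finite limit iff there is a nonnegative sequence `c j → 0` such that, for every
choice of block sizes `n j ≥ 1`, the block sums eventually satisfy `|S j| ≤ c j`. -/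
theorem convergence_iff_blockSums_eventually_bounded (x : ℕ → ℝ) :
    (∃ L : ℝ, Tendsto (fun m => ∑ i ∈ Finset.Icc 1 m, x i) atTop (nhds L)) ↔
      ∃ c : ℕ → ℝ, (∀ j, 0 ≤ c j) ∧ Tendsto c atTop (nhds 0) ∧
        ∀ n : ℕ → ℕ, (∀ j, 1 ≤ n j) →
          ∃ J : ℕ, ∀ j, J ≤ j → |blockSum x n j| ≤ c j := by
  set P : ℕ → ℝ := fun m => ∑ i ∈ Finset.Icc 1 m, x i with hP
  constructor
  · rintro ⟨L, hL⟩
    set g : ℕ → ℝ := fun m => |P m - L| with hg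
    have hg0 : Tendsto g atTop (nhds 0) := by
      have h1 : Tendsto (fun m => P m - L) atTop (nhds (L - L)) :=
        hL.sub tendsto_const_nhds
      have h2 := h1.abs
      simpa [hg] using h2
    have hbdd : BddAbove (Set.range g) := hg0.bddAbove_range
    have hbdd' : ∀ k : ℕ, BddAbove (Set.range fun m => g (k + m)) := by
      intro k
      refine hbdd.mono ?_
      rintro y ⟨m, rfl⟩; exact ⟨k + m, rfl⟩
    set c : ℕ → ℝ := fun j => 2 * ⨆ m, g ((j - 1) + m) with hc
    have hcnn : ∀ j, 0 ≤ c j := by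
      intro j
      have : 0 ≤ ⨆ m, g ((j - 1) + m) := Real.iSup_nonneg fun m => abs_nonneg _
      positivity
    refine ⟨c, hcnn, ?_, ?_⟩
    · rw [Metric.tendsto_atTop]
      intro ε hε
      rw [Metric.tendsto_atTop] at hg0
      obtain ⟨N, hN⟩ := hg0 (ε / 4) (by positivity)
      refine ⟨N + 1, fun j hj => ?_⟩
      have hsup : (⨆ m, g ((j - 1) + m)) ≤ ε / 4 := by
        refine ciSup_le fun m => ?_
        have hge : N ≤ (j - 1) + m := le_trans (by omega) (Nat.le_add_right _ _)
        have := hN _ hge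
        rw [Real.dist_eq, sub_zero, abs_abs] at this
        exact le_of_lt this
      have hcrfl : c j = 2 * ⨆ m, g ((j - 1) + m) := rfl
      have : c j ≤ ε / 2 := by rw [hcrfl]; linarith
      rw [Real.dist_eq, sub_zero, abs_of_nonneg (hcnn j)]
      linarith
    · intro n hn
      refine ⟨0, fun j _ => ?_⟩
      have key : ∀ a : ℕ, j - 1 ≤ a → g a ≤ ⨆ m, g ((j - 1) + m) := by
        intro a ha
        have : g a = g ((j - 1) + (a - (j - 1))) := by congr 1; omega
        rw [this]
        exact le_ciSup (hbdd' (j - 1)) _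
      have h1 : g (blockEnd n (j - 1)) ≤ ⨆ m, g ((j - 1) + m) :=
        key _ (le_blockEnd n hn (j - 1))
      have h2 : g (blockEnd n j) ≤ ⨆ m, g ((j - 1) + m) :=
        key _ (le_trans (le_blockEnd n hn (j - 1)) (blockEnd_mono n (Nat.sub_le j 1)))
      have heq : blockSum x n j = (P (blockEnd n j) - L) - (P (blockEnd n (j - 1)) - L) := by
        rw [blockSum_eq]; ring
      calc |blockSum x n j| ≤ g (blockEnd n j) + g (blockEnd n (j - 1)) := by
            rw [heq]; exact abs_sub _ _
        _ ≤ c j := by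
            have hcrfl : c j = 2 * ⨆ m, g ((j - 1) + m) := rfl
            rw [hcrfl]; linarith
  · rintro ⟨c, hcnn, hc0, hblock⟩
    by_contra hnot
    have hncauchy : ¬ CauchySeq P := fun h => hnot (cauchySeq_tendsto_of_complete h)
    rw [Metric.cauchySeq_iff] at hncauchy
    push_neg at hncauchy
    obtain ⟨ε, hε, H⟩ := hncauchy
    -- From non-Cauchy: for every N there are N ≤ a < b with ε ≤ |P b - P a|
    have H' : ∀ N : ℕ, ∃ a b : ℕ, N ≤ a ∧ a < b ∧ ε ≤ |P b - P a| := by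
      intro N
      obtain ⟨m, hm, k, hk, hd⟩ := H N
      rw [Real.dist_eq] at hd
      rcases lt_trichotomy m k with h | h | h
      · exact ⟨m, k, hm, h, by rw [abs_sub_comm]; linarith⟩
      · subst h; simp at hd; linarith
      · exact ⟨k, m, hk, h, hd⟩
    choose A B hA hAB hPAB using H'
    -- recursively build the pairs
    let g : ℕ → ℕ × ℕ := fun k => Nat.rec (0, 0)
      (fun _ p => (A (p.2 + 1), B (p.2 + 1))) k
    have hg0 : g 0 = (0, 0) := rfl
    have hgsucc : ∀ k, g (k + 1) = (A ((g k).2 + 1), B ((g k).2 + 1)) := fun k => rfl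
    have hglt : ∀ k, (g k).2 < (g (k + 1)).1 := by
      intro k; rw [hgsucc]; exact hA _
    have hgab : ∀ k, (g (k + 1)).1 < (g (k + 1)).2 := by
      intro k; rw [hgsucc]; exact hAB _
    have hgP : ∀ k, ε ≤ |P (g (k + 1)).2 - P (g (k + 1)).1| := by
      intro k; rw [hgsucc]; exact hPAB _
    -- endpoints
    let e : ℕ → ℕ := fun j => if j % 2 = 0 then (g (j / 2)).2 else (g (j / 2 + 1)).1
    have he0 : e 0 = 0 := by simp [e, hg0]
    have hemono : ∀ j, e j < e (j + 1) := by
      intro j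
      rcases Nat.even_or_odd j with ⟨t, ht⟩ | ⟨t, ht⟩
      · have h1 : j % 2 = 0 := by omega
        have h2 : (j + 1) % 2 = 1 := by omega
        have h3 : (j + 1) / 2 = j / 2 := by omega
        simp only [e, h1, h2, h3]
        norm_num
        exact hglt _
      · have h1 : j % 2 = 1 := by omega
        have h2 : (j + 1) % 2 = 0 := by omega
        have h3 : (j + 1) / 2 = j / 2 + 1 := by omega
        simp only [e, h1, h2, h3]
        norm_num
        exact hgab _
    -- block sizes
    let n : ℕ → ℕ := fun j => if j = 0 then 1 else e j - e (j - 1)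
    have hn : ∀ j, 1 ≤ n j := by
      intro j
      rcases Nat.eq_zero_or_pos j with rfl | hj
      · simp [n]
      · have := hemono (j - 1)
        have hj1 : j - 1 + 1 = j := by omega
        rw [hj1] at this
        simp only [n, if_neg (Nat.pos_iff_ne_zero.mp hj)]
        omega
    have hbe : ∀ j, blockEnd n j = e j := by
      intro j
      induction j with
      | zero => simp [blockEnd, he0]
      | succ j ih =>
        rw [blockEnd, ← Finset.Ico_add_one_right_eq_Icc, Finset.sum_Ico_succ_top (by omega), Finset.Ico_add_one_right_eq_Icc]
        rw [← blockEnd, ih]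
        have := hemono j
        simp only [n, if_neg (Nat.succ_ne_zero j), Nat.add_sub_cancel]
        omega
    have hodd : ∀ k, e (2 * k + 1) = (g (k + 1)).1 := by
      intro k
      have h1 : (2 * k + 1) % 2 = 1 := by omega
      have h2 : (2 * k + 1) / 2 = k := by omega
      simp [e, h1, h2]
    have heven : ∀ k, e (2 * k + 2) = (g (k + 1)).2 := by
      intro k
      have h1 : (2 * k + 2) % 2 = 0 := by omega
      have h2 : (2 * k + 2) / 2 = k + 1 := by omega
      simp [e, h1, h2]
    obtain ⟨J, hJ⟩ := hblock n hn
    rw [Metric.tendsto_atTop] at hc0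
    obtain ⟨K, hK⟩ := hc0 ε hε
    set j := 2 * (max J K) + 2 with hj
    have hjJ : J ≤ j := le_trans (le_max_left J K) (by omega)
    have hjK : K ≤ j := le_trans (le_max_right J K) (by omega)
    have hcj : c j < ε := by
      have := hK j hjK
      rw [Real.dist_eq, sub_zero, abs_of_nonneg (hcnn j)] at this
      exact this
    have hej : e j = (g (max J K + 1)).2 := by rw [hj]; exact heven _
    have hej1 : e (j - 1) = (g (max J K + 1)).1 := by
      rw [show j - 1 = 2 * (max J K) + 1 by omega]; exact hodd _
    have hbig : ε ≤ |blockSum x n j| := by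
      rw [blockSum_eq, hbe, hbe, hej, hej1]
      exact hgP _
    have := hJ j hjJ
    linarith
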